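/- Let W₀(x,y)=x+y+(xy)^{−1}. Then for each v in {(1,1),(−2,1),(1,−2)} the mutation μ_vW₀ is a Laurent polynomial; explicitly, on the respective domains: W₀(μ_{(1,1)}(x,y)) = y + (x+y)²/(xy³), W₀(μ_{(−2,1)}(x,y)) = x(1+xy²)² + (xy)^{−1}, and W₀(μ_{(1,−2)}(x,y)) = x + y(1+x^{−2}y^{−1})². In particular (W₀,{(1,1),(−2,1),(1,−2)}) is an LG seed (the LG seed of ℂP²). -/

import Mathlib

/-- The wall-crossing map `μ_v : (ℂ*)² ⇢ (ℂ*)²` associated to `v ∈ ℤ²`. -/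
noncomputable def muMap (v : ℤ × ℤ) (x y : ℂ) : ℂ × ℂ :=
  (x * (1 + x ^ v.2 * y ^ (-v.1)) ^ (-v.1),
   y * (1 + x ^ v.2 * y ^ (-v.1)) ^ (-v.2))

/-- Evaluation of a Laurent polynomial in two variables at a point `(x, y)`. -/
noncomputable def lEval (P : (ℤ × ℤ) →₀ ℂ) (x y : ℂ) : ℂ :=
  P.sum fun m c => c * x ^ m.1 * y ^ m.2

/-- The mutation of the function `W` along `v` agrees with a Laurent polynomial
on the domain of `μ_v`. -/
def funMutLaurent (W : ℂ → ℂ → ℂ) (v : ℤ × ℤ) : Prop :=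
  ∃ P : (ℤ × ℤ) →₀ ℂ, ∀ x y : ℂ, x ≠ 0 → y ≠ 0 →
    1 + x ^ v.2 * y ^ (-v.1) ≠ 0 →
    W (muMap v x y).1 (muMap v x y).2 = lEval P x y

/-- The toric potential of `ℂP²`. -/
noncomputable def W0 (x y : ℂ) : ℂ := x + y + (x * y)⁻¹

lemma lEval_add (P Q : (ℤ × ℤ) →₀ ℂ) (x y : ℂ) :
    lEval (P + Q) x y = lEval P x y + lEval Q x y :=
  Finsupp.sum_add_index' (fun _ => by simp) (fun _ _ _ => by ring)

lemma lEval_single (m : ℤ × ℤ) (c : ℂ) (x y : ℂ) :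
    lEval (Finsupp.single m c) x y = c * x ^ m.1 * y ^ m.2 :=
  Finsupp.sum_single_index (by simp)

lemma mut1 : ∀ x y : ℂ, x ≠ 0 → y ≠ 0 → 1 + x ^ (1 : ℤ) * y ^ (-1 : ℤ) ≠ 0 →
    W0 (muMap (1, 1) x y).1 (muMap (1, 1) x y).2
      = y + (x + y) ^ 2 / (x * y ^ 3) := by
  intro x y hx hy h
  simp only [muMap, W0] at *
  norm_num at *
  field_simp at h
  have h' : x + y ≠ 0 := by rw [add_comm]; simpa using h
  field_simp [h']
  rw [div_eq_iff (by rwa [add_comm])]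
  ring

lemma mut2 : ∀ x y : ℂ, x ≠ 0 → y ≠ 0 → 1 + x ^ (1 : ℤ) * y ^ (2 : ℤ) ≠ 0 →
    W0 (muMap (-2, 1) x y).1 (muMap (-2, 1) x y).2
      = x * (1 + x * y ^ 2) ^ 2 + (x * y)⁻¹ := by
  intro x y hx hy h
  simp only [muMap, W0]
  norm_num [zpow_ofNat] at h ⊢
  set t := 1 + x * y ^ 2 with ht
  clear_value t
  field_simp
  rw [ht]
  ring

lemma mut3 : ∀ x y : ℂ, x ≠ 0 → y ≠ 0 → 1 + x ^ (-2 : ℤ) * y ^ (-1 : ℤ) ≠ 0 →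
    W0 (muMap (1, -2) x y).1 (muMap (1, -2) x y).2
      = x + y * (1 + x ^ (-2 : ℤ) * y ^ (-1 : ℤ)) ^ 2 := by
  intro x y hx hy h
  simp only [muMap, W0]
  norm_num [zpow_ofNat] at h ⊢
  have h' : x ^ 2 * y + 1 ≠ 0 := by
    intro hc; apply h; field_simp; linear_combination hc
  field_simp
  have e : (x ^ 2 * y) ^ 2 * (x ^ 2 * y + 1) * ((x ^ 2 * y + 1) * (x ^ 2 * y) ^ 2) /
        ((x ^ 2 * y + 1) ^ 2 * y * (x ^ 2 * y * x)) = x ^ 5 * y ^ 2 := by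
    rw [div_eq_iff (by simp [h', hx, hy])]
    ring
  ring

/-- `(x + y + (xy)⁻¹, {(1,1), (-2,1), (1,-2)})` is an LG seed (the LG seed of `ℂP²`):
each of the three mutations of `W₀ = x + y + (xy)⁻¹` is a Laurent polynomial,
with the explicit formulas given on the respective domains. -/
theorem cp2_LG_seed :
    (∀ x y : ℂ, x ≠ 0 → y ≠ 0 → 1 + x ^ (1 : ℤ) * y ^ (-1 : ℤ) ≠ 0 →
      W0 (muMap (1, 1) x y).1 (muMap (1, 1) x y).2
        = y + (x + y) ^ 2 / (x * y ^ 3)) ∧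
    (∀ x y : ℂ, x ≠ 0 → y ≠ 0 → 1 + x ^ (1 : ℤ) * y ^ (2 : ℤ) ≠ 0 →
      W0 (muMap (-2, 1) x y).1 (muMap (-2, 1) x y).2
        = x * (1 + x * y ^ 2) ^ 2 + (x * y)⁻¹) ∧
    (∀ x y : ℂ, x ≠ 0 → y ≠ 0 → 1 + x ^ (-2 : ℤ) * y ^ (-1 : ℤ) ≠ 0 →
      W0 (muMap (1, -2) x y).1 (muMap (1, -2) x y).2
        = x + y * (1 + x ^ (-2 : ℤ) * y ^ (-1 : ℤ)) ^ 2) ∧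
    funMutLaurent W0 (1, 1) ∧ funMutLaurent W0 (-2, 1) ∧ funMutLaurent W0 (1, -2) := by
  refine ⟨mut1, mut2, mut3, ?_, ?_, ?_⟩
  · refine ⟨Finsupp.single (0, 1) 1 + Finsupp.single (1, -3) 1
      + Finsupp.single (0, -2) 2 + Finsupp.single (-1, -1) 1, fun x y hx hy h => ?_⟩
    rw [mut1 x y hx hy h]
    simp only [lEval_add, lEval_single]
    norm_num [zpow_ofNat]
    field_simp
    ring
  · refine ⟨Finsupp.single (1, 0) 1 + Finsupp.single (2, 2) 2
      + Finsupp.single (3, 4) 1 + Finsupp.single (-1, -1) 1, fun x y hx hy h => ?_⟩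
    rw [mut2 x y hx hy h]
    simp only [lEval_add, lEval_single]
    norm_num [zpow_ofNat]
    field_simp
    ring
  · refine ⟨Finsupp.single (1, 0) 1 + Finsupp.single (0, 1) 1
      + Finsupp.single (-2, 0) 2 + Finsupp.single (-4, -1) 1, fun x y hx hy h => ?_⟩
    rw [mut3 x y hx hy h]
    simp only [lEval_add, lEval_single]
    norm_num [zpow_ofNat]
    field_simp
    ring
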